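/- (Minimum Principle) Let f : [a,b] → ℝ be C^3 with negative Schwarzian derivative and Df(x) ≠ 0 for all x ∈ [a,b]. Then for every x in the open interval (a,b), |Df(x)| > min{|Df(a)|, |Df(b)|}. -/

import Mathlib

open Set

noncomputable def schwarzian (f : ℝ → ℝ) (x : ℝ) : ℝ :=
  iteratedDeriv 3 f x / deriv f x - (3 / 2) * (iteratedDeriv 2 f x / deriv f x) ^ 2

lemma aux_pos (f : ℝ → ℝ) (a b : ℝ) (hab : a < b)
    (hf : ContDiff ℝ 3 f)
    (hS : ∀ x ∈ Icc a b, schwarzian f x < 0)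
    (hd : ∀ x ∈ Icc a b, 0 < deriv f x) :
    ∀ x ∈ Ioo a b, min (deriv f a) (deriv f b) < deriv f x := by
  have h2 : ContDiff ℝ 2 (deriv f) :=
    ((contDiff_succ_iff_deriv (n := 2)).mp (by norm_num at hf ⊢; exact hf)).2.2
  have h1 : ContDiff ℝ 1 (deriv (deriv f)) :=
    ((contDiff_succ_iff_deriv (n := 1)).mp (by norm_num at h2 ⊢; exact h2)).2.2
  have hg2 : Differentiable ℝ (deriv (deriv f)) := h1.differentiable (by norm_num)
  have hg1 : Differentiable ℝ (deriv f) := h2.differentiable (by norm_num)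
  have hgc : Continuous (deriv f) := hg1.continuous
  set g : ℝ → ℝ := deriv f with hg
  intro x hx
  by_contra hcon
  push_neg at hcon
  -- obtain an interior minimizer c of g on Icc a b
  obtain ⟨c0, hc0, hmin0⟩ := isCompact_Icc.exists_isMinOn (nonempty_Icc.mpr hab.le)
    hgc.continuousOn (f := g)
  have hxmem : x ∈ Icc a b := Ioo_subset_Icc_self hx
  have key : ∃ c ∈ Ioo a b, IsMinOn g (Icc a b) c := by
    rcases eq_or_ne c0 a with rfl | ha'
    · refine ⟨x, hx, fun y hy => ?_⟩
      have : g x ≤ g c0 := le_trans hcon (min_le_left _ _)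
      exact le_trans this (hmin0 hy)
    rcases eq_or_ne c0 b with rfl | hb'
    · refine ⟨x, hx, fun y hy => ?_⟩
      have : g x ≤ g c0 := le_trans hcon (min_le_right _ _)
      exact le_trans this (hmin0 hy)
    exact ⟨c0, ⟨lt_of_le_of_ne hc0.1 (Ne.symm ha'), lt_of_le_of_ne hc0.2 hb'⟩, hmin0⟩
  obtain ⟨c, hc, hmin⟩ := key
  have hcI : Icc a b ∈ nhds c := Icc_mem_nhds hc.1 hc.2
  have hloc : IsLocalMin g c := hmin.isLocalMin hcI
  have hg'c : deriv g c = 0 := hloc.deriv_eq_zero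
  -- Schwarzian at c forces f'''(c) < 0
  have hS' : schwarzian f c < 0 := hS c (Ioo_subset_Icc_self hc)
  have h2c : iteratedDeriv 2 f c = 0 := by
    rw [iteratedDeriv_succ, iteratedDeriv_one]; exact hg'c
  have h3c : iteratedDeriv 3 f c < 0 := by
    have hfc : 0 < deriv f c := hd c (Ioo_subset_Icc_self hc)
    have : iteratedDeriv 3 f c / deriv f c < 0 := by
      simpa [schwarzian, h2c] using hS'
    exact (div_neg_iff.mp this).elim (fun h => absurd h.2 (not_lt.mpr hfc.le))
      (fun h => h.1)
  have h3c' : deriv (deriv g) c < 0 := by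
    have : iteratedDeriv 3 f = deriv (deriv (deriv f)) := by
      rw [iteratedDeriv_succ, iteratedDeriv_succ, iteratedDeriv_one]
    rwa [this] at h3c
  -- f'' < 0 just to the right of c
  have hder : HasDerivAt (deriv g) (deriv (deriv g) c) c := (hg2 c).hasDerivAt
  have hslope := hasDerivAt_iff_tendsto_slope.mp hder
  have hslope' : Filter.Tendsto (slope (deriv g) c) (nhdsWithin c (Ioi c))
      (nhds (deriv (deriv g) c)) :=
    hslope.mono_left (nhdsWithin_mono c (fun y hy => ne_of_gt hy))
  have hev : ∀ᶠ y in nhdsWithin c (Ioi c), slope (deriv g) c y < 0 :=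
    hslope'.eventually_lt_const h3c'
  have hev2 : ∀ᶠ y in nhdsWithin c (Ioi c), deriv g y < 0 := by
    filter_upwards [hev, self_mem_nhdsWithin] with y hy hy'
    have hyc : (0:ℝ) < y - c := sub_pos.mpr hy'
    have : (deriv g y - deriv g c) / (y - c) < 0 := by
      simpa [slope_def_field, div_eq_inv_mul] using hy
    rw [hg'c, sub_zero] at this
    exact (div_neg_iff.mp this).elim (fun h => absurd h.2 (not_lt.mpr hyc.le))
      (fun h => h.1)
  obtain ⟨u, hu, hub⟩ := mem_nhdsGT_iff_exists_Ioo_subset.mp hev2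
  -- g is strictly decreasing on [c, d] for d = min u b
  set d := min u b with hd'
  have hcd : c < d := lt_min hu hc.2
  have hsub : Ioo c d ⊆ Ioo c u := Ioo_subset_Ioo le_rfl (min_le_left _ _)
  have hanti : StrictAntiOn g (Icc c d) := by
    apply strictAntiOn_of_deriv_neg (convex_Icc c d) hgc.continuousOn
    intro y hy
    rw [interior_Icc] at hy
    exact hub (hsub hy)
  have hdd : d ∈ Icc a b := ⟨le_trans hc.1.le hcd.le, min_le_right _ _⟩
  have : g d < g c := hanti (left_mem_Icc.mpr hcd.le) (right_mem_Icc.mpr hcd.le) hcd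
  exact absurd (hmin hdd) (not_le.mpr this)

theorem minimum_principle (f : ℝ → ℝ) (a b : ℝ) (hab : a < b)
    (hf : ContDiff ℝ 3 f)
    (hS : ∀ x ∈ Icc a b, schwarzian f x < 0)
    (hd : ∀ x ∈ Icc a b, deriv f x ≠ 0) :
    ∀ x ∈ Ioo a b, min |deriv f a| |deriv f b| < |deriv f x| := by
  have h2 : ContDiff ℝ 2 (deriv f) :=
    ((contDiff_succ_iff_deriv (n := 2)).mp (by norm_num at hf ⊢; exact hf)).2.2
  have hgc : Continuous (deriv f) := (h2.differentiable (by norm_num)).continuous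
  have haI : a ∈ Icc a b := left_mem_Icc.mpr hab.le
  -- constant sign of deriv f on [a,b]
  rcases lt_or_gt_of_ne (hd a haI) with hneg | hpos
  · -- deriv f < 0 on Icc
    have hsign : ∀ x ∈ Icc a b, deriv f x < 0 := by
      intro x hxI
      by_contra h
      push_neg at h
      have h' : 0 < deriv f x := lt_of_le_of_ne h (Ne.symm (hd x hxI))
      obtain ⟨y, hy, hy0⟩ := intermediate_value_Icc hxI.1 (hgc.continuousOn)
        (⟨hneg.le, h'.le⟩ : (0:ℝ) ∈ Icc (deriv f a) (deriv f x))
      exact hd y ⟨hy.1, le_trans hy.2 hxI.2⟩ hy0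
    -- apply aux_pos to -f
    have hres := aux_pos (fun t => -f t) a b hab hf.neg ?_ ?_
    · intro x hx
      have e : ∀ y, deriv (fun t => -f t) y = -deriv f y := fun y => deriv.neg
      have := hres x hx
      rw [e, e, e] at this
      have hax : |deriv f a| = -deriv f a := abs_of_neg hneg
      have hbx : |deriv f b| = -deriv f b := abs_of_neg (hsign b (right_mem_Icc.mpr hab.le))
      have hxx : |deriv f x| = -deriv f x := abs_of_neg (hsign x (Ioo_subset_Icc_self hx))
      rw [hax, hbx, hxx]
      exact this
    · intro y hy
      have e2 : iteratedDeriv 2 (fun t => -f t) y = -iteratedDeriv 2 f y :=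
        iteratedDeriv_neg 2 f y
      have e3 : iteratedDeriv 3 (fun t => -f t) y = -iteratedDeriv 3 f y :=
        iteratedDeriv_neg 3 f y
      have e1 : deriv (fun t => -f t) y = -deriv f y := deriv.neg
      have : schwarzian (fun t => -f t) y = schwarzian f y := by
        simp only [schwarzian, e1, e2, e3, neg_div_neg_eq]
      rw [this]; exact hS y hy
    · intro y hy
      have e1 : deriv (fun t => -f t) y = -deriv f y := deriv.neg
      rw [e1]; linarith [hsign y hy]
  · have hsign : ∀ x ∈ Icc a b, 0 < deriv f x := by
      intro x hxI
      by_contra h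
      push_neg at h
      have h' : deriv f x < 0 := lt_of_le_of_ne h (hd x hxI)
      obtain ⟨y, hy, hy0⟩ := intermediate_value_Icc' hxI.1 (hgc.continuousOn)
        (⟨h'.le, hpos.le⟩ : (0:ℝ) ∈ Icc (deriv f x) (deriv f a))
      exact hd y ⟨hy.1, le_trans hy.2 hxI.2⟩ hy0
    intro x hx
    have := aux_pos f a b hab hf hS hsign x hx
    rw [abs_of_pos hpos, abs_of_pos (hsign b (right_mem_Icc.mpr hab.le)),
      abs_of_pos (hsign x (Ioo_subset_Icc_self hx))]
    exact this
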